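/- Let ε ∈ {0, 1} and let v₀, w_{m₀}, L₀, h₀ be real numbers with v₀ > 0, w_{m₀} > 0, L₀ > 0, h₀ > 0 and v₀ > ε·w_{m₀}. Then there exists a unique γ > 0 such that (2·v₀·h₀ − L₀·γ)·exp(−γ²) = (w_{m₀} + L₀·γ²)·(√π·erf(γ) + 2·h₀·ε). -/

import Mathlib

open Real MeasureTheory Set

noncomputable section

/-- The error function `erf x = (2/√π) ∫₀ˣ exp(−u²) du`. -/
def erf (x : ℝ) : ℝ := (2 / Real.sqrt π) * ∫ u in (0:ℝ)..x, Real.exp (-u ^ 2)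

/-- Partial derivative in the first (space) variable. -/
def pz (f : ℝ → ℝ → ℝ) (z t : ℝ) : ℝ := deriv (fun z' => f z' t) z

/-- Partial derivative in the second (time) variable. -/
def pt (f : ℝ → ℝ → ℝ) (z t : ℝ) : ℝ := deriv (fun t' => f z t') t

/-- Second partial derivative in the first (space) variable. -/
def pzz (f : ℝ → ℝ → ℝ) (z t : ℝ) : ℝ := deriv (fun z' => pz f z' t) z

lemma erf_hasDerivAt (x : ℝ) :
    HasDerivAt erf ((2 / Real.sqrt π) * Real.exp (-x ^ 2)) x := by
  have hc : Continuous fun u : ℝ => Real.exp (-u ^ 2) := by continuity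
  exact ((hc.integral_hasStrictDerivAt 0 x).hasDerivAt).const_mul _

lemma erf_pos {x : ℝ} (hx : 0 < x) : 0 < erf x := by
  have hc : Continuous fun u : ℝ => Real.exp (-u ^ 2) := by continuity
  refine mul_pos (div_pos two_pos (Real.sqrt_pos.mpr Real.pi_pos)) ?_
  exact intervalIntegral.intervalIntegral_pos_of_pos (hc.intervalIntegrable 0 x)
    (fun u => Real.exp_pos _) hx

lemma erf_zero : erf 0 = 0 := by simp [erf]

/-- unique positive root of the transcendental equation for the
Robin/Neumann similarity solution. -/
theorem statement11 (ε v₀ wm₀ L₀ h₀ : ℝ) (hε : ε = 0 ∨ ε = 1)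
    (h1 : 0 < v₀) (h2 : 0 < wm₀) (h3 : 0 < L₀) (h4 : 0 < h₀)
    (h5 : ε * wm₀ < v₀) :
    ∃! γ : ℝ, 0 < γ ∧
      (2 * v₀ * h₀ - L₀ * γ) * Real.exp (-γ ^ 2) =
        (wm₀ + L₀ * γ ^ 2) * (Real.sqrt π * erf γ + 2 * h₀ * ε) := by
  have hε0 : 0 ≤ ε := by rcases hε with h | h <;> simp [h]
  have hsπ : (0:ℝ) < Real.sqrt π := Real.sqrt_pos.mpr Real.pi_pos
  set F : ℝ → ℝ := fun γ => (2 * v₀ * h₀ - L₀ * γ) * Real.exp (-γ ^ 2) -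
      (wm₀ + L₀ * γ ^ 2) * (Real.sqrt π * erf γ + 2 * h₀ * ε) with hF
  -- derivative of F
  have hder : ∀ x : ℝ, HasDerivAt F
      (-Real.exp (-x ^ 2) * (L₀ + 4 * v₀ * h₀ * x + 2 * wm₀) -
        2 * L₀ * x * (Real.sqrt π * erf x + 2 * h₀ * ε)) x := by
    intro x
    have hx2 : HasDerivAt (fun x : ℝ => -x ^ 2) (-(2 * x)) x := by
      simpa using ((hasDerivAt_pow 2 x).fun_neg)
    have hE : HasDerivAt (fun x : ℝ => Real.exp (-x ^ 2))
        (Real.exp (-x ^ 2) * (-(2 * x))) x := hx2.exp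
    have h1' : HasDerivAt (fun x : ℝ => 2 * v₀ * h₀ - L₀ * x) (-L₀) x := by
      simpa using ((hasDerivAt_id x).const_mul L₀).const_sub (2 * v₀ * h₀)
    have h2' : HasDerivAt (fun x : ℝ => wm₀ + L₀ * x ^ 2) (L₀ * (2 * x)) x := by
      simpa using ((hasDerivAt_pow 2 x).const_mul L₀).const_add wm₀
    have h3' : HasDerivAt (fun x : ℝ => Real.sqrt π * erf x + 2 * h₀ * ε)
        (Real.sqrt π * ((2 / Real.sqrt π) * Real.exp (-x ^ 2))) x :=
      (((erf_hasDerivAt x).const_mul (Real.sqrt π))).add_const _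
    have hπ : Real.sqrt π * ((2 / Real.sqrt π) * Real.exp (-x ^ 2)) =
        2 * Real.exp (-x ^ 2) := by
      field_simp
    rw [hπ] at h3'
    have := (h1'.mul hE).sub (h2'.mul h3')
    convert this using 1
    · rfl
    · rfl
    · rfl
    · ring
  have hcont : Continuous F := by
    have : Differentiable ℝ F := fun x => (hder x).differentiableAt
    exact this.continuous
  -- F is strictly decreasing on [0, ∞)
  have hanti : StrictAntiOn F (Ici 0) := by
    apply strictAntiOn_of_deriv_neg (convex_Ici 0) hcont.continuousOn
    intro x hx
    rw [interior_Ici] at hx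
    rw [(hder x).deriv]
    have hE : 0 < Real.exp (-x ^ 2) := Real.exp_pos _
    have herf : 0 < erf x := erf_pos hx
    have hx0 : (0:ℝ) < x := hx
    have h6 : (0:ℝ) ≤ 2 * h₀ * ε := by positivity
    have ha : 0 < Real.exp (-x ^ 2) * (L₀ + 4 * v₀ * h₀ * x + 2 * wm₀) :=
      mul_pos hE (by nlinarith [mul_pos (mul_pos h1 h4) hx0])
    have hb : 0 ≤ 2 * L₀ * x * (Real.sqrt π * erf x + 2 * h₀ * ε) :=
      mul_nonneg (by positivity) (by nlinarith [mul_pos hsπ herf])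
    linarith
  -- F 0 > 0
  have hF0 : 0 < F 0 := by
    simp only [hF, erf_zero]
    norm_num
    nlinarith [mul_pos h4 (sub_pos.mpr h5)]
  -- F b < 0 for large b
  set b : ℝ := max 1 (2 * v₀ * h₀ / L₀ + 1) with hb
  have hb1 : (1:ℝ) ≤ b := le_max_left _ _
  have hb0 : 0 < b := lt_of_lt_of_le one_pos hb1
  have hbig : 2 * v₀ * h₀ < L₀ * b := by
    have : 2 * v₀ * h₀ / L₀ + 1 ≤ b := le_max_right _ _
    have := (div_le_iff₀ h3).mp (by linarith : 2 * v₀ * h₀ / L₀ ≤ b - 1)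
    nlinarith
  have hFb : F b < 0 := by
    have hE : 0 < Real.exp (-b ^ 2) := Real.exp_pos _
    have herf : 0 < erf b := erf_pos hb0
    have : (2 * v₀ * h₀ - L₀ * b) * Real.exp (-b ^ 2) < 0 :=
      mul_neg_of_neg_of_pos (by linarith) hE
    have hpos : 0 < (wm₀ + L₀ * b ^ 2) * (Real.sqrt π * erf b + 2 * h₀ * ε) := by
      apply mul_pos (by positivity)
      have := mul_pos hsπ herf
      nlinarith [mul_nonneg h4.le hε0]
    simp only [hF]
    linarith
  -- existence by IVT
  obtain ⟨γ, hγmem, hγ⟩ : ∃ γ ∈ Ioo (0:ℝ) b, F γ = 0 := by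
    have := intermediate_value_Ioo' hb0.le hcont.continuousOn
      (show (0:ℝ) ∈ Ioo (F b) (F 0) from ⟨hFb, hF0⟩)
    obtain ⟨γ, hγ1, hγ2⟩ := this
    exact ⟨γ, hγ1, hγ2⟩
  refine ⟨γ, ⟨hγmem.1, by have := hγ; simp only [hF] at this; linarith⟩, ?_⟩
  rintro y ⟨hy0, hyeq⟩
  have hFy : F y = 0 := by simp only [hF]; linarith
  exact hanti.injOn hy0.le hγmem.1.le (by rw [hFy, hγ])
end
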